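/- If k : ℝ → ℝ is bounded, integrable with ∫ k = 1, and |x k(x)| → 0 as |x| → ∞, and f is a probability density on ℝ, then for every point u at which f is continuous, ∫ f(u − b t) k(t) dt → f(u) as b → 0⁺. Consequently the expectation of the kernel density estimator, E[f̃(u)] = ∫ k_b(u − x) f(x) dx with k_b(x) = k(x/b)/b, converges to f(u) as b → 0⁺. -/

import Mathlib

open MeasureTheory Filter

/-- Bochner-type approximate identity lemma: the expectation of the kernel density
estimator converges to `f(u)` at continuity points of `f` as `b → 0⁺`. -/
theorem kernel_smoother_converges_at_continuity_point
    (k f : ℝ → ℝ)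
    (hk_int : Integrable k)
    (hk_bdd : ∃ C, ∀ x, |k x| ≤ C)
    (hk_one : ∫ x, k x = 1)
    (hk_tail_top : Tendsto (fun x => |x * k x|) atTop (nhds 0))
    (hk_tail_bot : Tendsto (fun x => |x * k x|) atBot (nhds 0))
    (hf_int : Integrable f)
    (hf_nonneg : ∀ x, 0 ≤ f x)
    (hf_one : ∫ x, f x = 1)
    (u : ℝ) (hu : ContinuousAt f u) :
    Tendsto (fun b => ∫ t, f (u - b * t) * k t) (nhdsWithin 0 (Set.Ioi 0))
      (nhds (f u)) ∧
    Tendsto (fun b => ∫ x, (k ((u - x) / b) / b) * f x) (nhdsWithin 0 (Set.Ioi 0))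
      (nhds (f u)) := by
  obtain ⟨C, hC⟩ := hk_bdd
  have hk_meas := hk_int.aestronglyMeasurable
  have hkabs : Integrable (fun t => |k t|) := hk_int.abs
  have hfu_int : Integrable (fun x => f (u - x)) := hf_int.comp_sub_left u
  -- integrability and integral of t ↦ f (u - b t) for b > 0
  have hfb_int : ∀ b : ℝ, b ≠ 0 → Integrable (fun t => f (u - b * t)) := fun b hb =>
    hfu_int.comp_mul_left' hb
  have hfb_val : ∀ b : ℝ, 0 < b → ∫ t, f (u - b * t) = b⁻¹ := by
    intro b hb
    have h1 : (∫ t, (fun y => f (u - y)) (b * t)) = |b⁻¹| • ∫ y, f (u - y) :=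
      MeasureTheory.Measure.integral_comp_mul_left (fun y => f (u - y)) b
    rw [MeasureTheory.integral_sub_left_eq_self, hf_one] at h1
    simpa [abs_of_pos (inv_pos.mpr hb)] using h1
  -- product integrability
  have hprod_int : ∀ b : ℝ, b ≠ 0 → Integrable (fun t => f (u - b * t) * k t) := by
    intro b hb
    have := (hfb_int b hb).bdd_mul (c := C) hk_meas (Eventually.of_forall fun x => by
      simpa [Real.norm_eq_abs] using hC x)
    -- this : Integrable fun x => k x * f (u - b * x)
    simpa [mul_comm] using this
  -- Main convergence
  have main : Tendsto (fun b => ∫ t, f (u - b * t) * k t) (nhdsWithin 0 (Set.Ioi 0))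
      (nhds (f u)) := by
    rw [Metric.tendsto_nhdsWithin_nhds]
    intro ε hε
    set K := ∫ t, |k t| with hK_def
    have hK0 : 0 ≤ K := integral_nonneg fun t => abs_nonneg _
    -- ε₁ from continuity of f at u
    set ε1 := ε / (3 * (K + 1)) with hε1_def
    have hε1 : 0 < ε1 := by positivity
    obtain ⟨δ, hδ, hδc⟩ := Metric.continuousAt_iff.mp hu ε1 hε1
    -- ε₂ for the kernel tail decay
    set ε2 := δ * ε / 4 with hε2_def
    have hε2 : 0 < ε2 := by positivity
    obtain ⟨M1, hM1⟩ := eventually_atTop.mp (hk_tail_top.eventually (gt_mem_nhds hε2))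
    obtain ⟨M2, hM2⟩ := eventually_atBot.mp (hk_tail_bot.eventually (gt_mem_nhds hε2))
    -- ε₃ for the integrable tail of |k|
    have hfu0 : (0:ℝ) < f u + 1 := by linarith [hf_nonneg u]
    set ε3 := ε / (3 * (f u + 1)) with hε3_def
    have hε3 : 0 < ε3 := div_pos hε (by positivity)
    -- find N with small tail integral of |k| outside Icc (-N) N
    have htail : Tendsto (fun n : ℕ => ∫ t in Set.Icc (-(n:ℝ)) n, |k t|) atTop (nhds K) := by
      have hU : (⋃ n : ℕ, Set.Icc (-(n:ℝ)) n) = Set.univ := by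
        apply Set.eq_univ_iff_forall.mpr
        intro x
        refine Set.mem_iUnion.mpr ⟨⌈|x|⌉₊, ?_⟩
        have hx : |x| ≤ ⌈|x|⌉₊ := Nat.le_ceil _
        constructor
        · linarith [neg_abs_le x]
        · linarith [le_abs_self x]
      have := tendsto_setIntegral_of_monotone (μ := volume) (f := fun t => |k t|)
        (s := fun n : ℕ => Set.Icc (-(n:ℝ)) n)
        (fun n => measurableSet_Icc)
        (fun m n hmn => Set.Icc_subset_Icc (by exact_mod_cast neg_le_neg (Nat.cast_le.mpr hmn))
          (by exact_mod_cast hmn))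
        (by rw [hU]; exact hkabs.integrableOn)
      rwa [hU, setIntegral_univ] at this
    obtain ⟨N, hN⟩ := eventually_atTop.mp
      (htail.eventually (lt_mem_nhds (show K - ε3 < K by linarith)))
    have hNtail : ∫ t in (Set.Icc (-(N:ℝ)) N)ᶜ, |k t| < ε3 := by
      have hsplit : (∫ t in Set.Icc (-(N:ℝ)) N, |k t|) + ∫ t in (Set.Icc (-(N:ℝ)) N)ᶜ, |k t| = K :=
        integral_add_compl measurableSet_Icc hkabs
      have := hN N le_rfl
      linarith
    -- the threshold
    set M := max (max M1 (-M2)) (max ((N:ℝ) + 1) 1) with hM_def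
    have hM1' : M1 ≤ M := le_trans (le_max_left _ _) (le_max_left _ _)
    have hM2' : -M2 ≤ M := le_trans (le_max_right _ _) (le_max_left _ _)
    have hMN : (N:ℝ) + 1 ≤ M := le_trans (le_max_left _ _) (le_max_right _ _)
    have hM0 : (0:ℝ) < M := lt_of_lt_of_le one_pos (le_trans (le_max_right _ _) (le_max_right _ _))
    refine ⟨δ / M, div_pos hδ hM0, ?_⟩
    intro b hb hbd
    have hb0 : (0:ℝ) < b := hb
    have hbM : b < δ / M := by
      rwa [Real.dist_eq, sub_zero, abs_of_pos hb0] at hbd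
    -- the far set
    set S : Set ℝ := {t : ℝ | δ / b ≤ |t|} with hS_def
    have hSmeas : MeasurableSet S := measurableSet_le measurable_const measurable_abs
    have hδb : M < δ / b := by
      rw [lt_div_iff₀ hb0]
      calc M * b < M * (δ / M) := by
            exact mul_lt_mul_of_pos_left hbM hM0
        _ = δ := by field_simp
    have hS_far : ∀ t ∈ S, M < |t| := fun t ht => lt_of_lt_of_le hδb ht
    -- tail kernel bound on S
    have hS_kb : ∀ t ∈ S, |k t| ≤ ε2 * b / δ := by
      intro t ht
      have htM : M < |t| := hS_far t ht
      have ht0 : (0:ℝ) < |t| := lt_trans hM0 htM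
      have htk : |t * k t| ≤ ε2 := by
        rcases le_or_gt 0 t with h | h
        · have htM' : M < t := by rwa [abs_of_nonneg h] at htM
          exact (hM1 t (by linarith)).le
        · have htM' : M < -t := by rwa [abs_of_neg h] at htM
          exact (hM2 t (by linarith)).le
      have hkle : |k t| ≤ ε2 / |t| := by
        rw [le_div_iff₀ ht0]
        calc |k t| * |t| = |t * k t| := by rw [abs_mul]; ring
          _ ≤ ε2 := htk
      calc |k t| ≤ ε2 / |t| := hkle
        _ ≤ ε2 / (δ / b) := by
            apply div_le_div_of_nonneg_left hε2.le (div_pos hδ hb0) ht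
        _ = ε2 * b / δ := by field_simp
    -- S avoids the Icc
    have hS_sub : S ⊆ (Set.Icc (-(N:ℝ)) N)ᶜ := by
      intro t ht
      have htM : M < |t| := hS_far t ht
      intro hmem
      have h1 : |t| ≤ N := abs_le.mpr ⟨hmem.1, hmem.2⟩
      linarith
    -- near continuity bound
    have hnear : ∀ t ∈ Sᶜ, |f (u - b * t) - f u| ≤ ε1 := by
      intro t ht
      have ht' : |t| < δ / b := lt_of_not_ge ht
      have : dist (u - b * t) u < δ := by
        rw [Real.dist_eq]
        have : |b * t| < δ := by
          rw [abs_mul, abs_of_pos hb0]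
          calc b * |t| < b * (δ / b) := mul_lt_mul_of_pos_left ht' hb0
            _ = δ := by field_simp
        calc |u - b * t - u| = |b * t| := by rw [abs_sub_comm]; ring_nf
          _ < δ := this
      exact (hδc this).le
    -- integrability of pieces
    have hfb := hfb_int b hb0.ne'
    have hprod := hprod_int b hb0.ne'
    have hconst : Integrable (fun t => f u * k t) := hk_int.const_mul (f u)
    have hdiff : Integrable (fun t => (f (u - b * t) - f u) * k t) := by
      simpa [sub_mul] using (hprod.sub hconst : Integrable (fun t => f (u - b * t) * k t - f u * k t))
    have hdiff_abs : Integrable (fun t => |(f (u - b * t) - f u) * k t|) := hdiff.abs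
    have hfk_abs : Integrable (fun t => f (u - b * t) * |k t|) := by
      have := hfb.bdd_mul (c := C) hkabs.aestronglyMeasurable (Eventually.of_forall fun x => by
        simpa [Real.norm_eq_abs, abs_abs] using hC x)
      simpa [mul_comm] using this
    -- key decomposition
    have hkey : (∫ t, f (u - b * t) * k t) - f u = ∫ t, (f (u - b * t) - f u) * k t := by
      have h2 : (∫ t, f u * k t) = f u := by
        rw [integral_const_mul, hk_one, mul_one]
      rw [show (fun t => (f (u - b * t) - f u) * k t)
            = fun t => f (u - b * t) * k t - f u * k t from funext fun t => by ring,
        integral_sub hprod hconst, h2]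
    rw [Real.dist_eq, hkey]
    -- split the integral
    have hsplit : (∫ t, (f (u - b * t) - f u) * k t)
        = (∫ t in S, (f (u - b * t) - f u) * k t) + ∫ t in Sᶜ, (f (u - b * t) - f u) * k t :=
      (integral_add_compl hSmeas hdiff).symm
    rw [hsplit]
    -- near bound
    have hnear_bd : |∫ t in Sᶜ, (f (u - b * t) - f u) * k t| ≤ ε1 * K := by
      calc |∫ t in Sᶜ, (f (u - b * t) - f u) * k t|
          ≤ ∫ t in Sᶜ, |(f (u - b * t) - f u) * k t| := by
            simpa only [Real.norm_eq_abs] using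
              norm_integral_le_integral_norm (μ := volume.restrict Sᶜ)
                (fun t => (f (u - b * t) - f u) * k t)
        _ ≤ ∫ t in Sᶜ, ε1 * |k t| := by
            apply setIntegral_mono_on hdiff_abs.integrableOn
              (hkabs.const_mul ε1).integrableOn hSmeas.compl
            intro t ht
            rw [abs_mul]
            exact mul_le_mul_of_nonneg_right (hnear t ht) (abs_nonneg _)
        _ = ε1 * ∫ t in Sᶜ, |k t| := integral_const_mul _ _
        _ ≤ ε1 * K := by
            apply mul_le_mul_of_nonneg_left _ hε1.le
            exact setIntegral_le_integral hkabs (Eventually.of_forall fun t => abs_nonneg _)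
    -- far bound
    have hfar_bd : |∫ t in S, (f (u - b * t) - f u) * k t| ≤ ε2 / δ + f u * ε3 := by
      have habs_le : ∀ t ∈ S, |(f (u - b * t) - f u) * k t|
          ≤ f (u - b * t) * |k t| + f u * |k t| := by
        intro t _
        rw [abs_mul]
        have h1 : |f (u - b * t) - f u| ≤ f (u - b * t) + f u := by
          rw [abs_sub_le_iff]
          constructor
          · linarith [hf_nonneg u]
          · linarith [hf_nonneg (u - b * t)]
        calc |f (u - b * t) - f u| * |k t| ≤ (f (u - b * t) + f u) * |k t| :=
              mul_le_mul_of_nonneg_right h1 (abs_nonneg _)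
          _ = f (u - b * t) * |k t| + f u * |k t| := by ring
      have hsum_int : Integrable (fun t => f (u - b * t) * |k t| + f u * |k t|) :=
        hfk_abs.add (hkabs.const_mul (f u))
      have hA : (∫ t in S, f (u - b * t) * |k t|) ≤ ε2 / δ := by
        have hbound : ∀ t ∈ S, f (u - b * t) * |k t| ≤ f (u - b * t) * (ε2 * b / δ) := by
          intro t ht
          exact mul_le_mul_of_nonneg_left (hS_kb t ht) (hf_nonneg _)
        calc (∫ t in S, f (u - b * t) * |k t|)
            ≤ ∫ t in S, f (u - b * t) * (ε2 * b / δ) :=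
              setIntegral_mono_on hfk_abs.integrableOn
                (hfb.mul_const _).integrableOn hSmeas hbound
          _ ≤ ∫ t, f (u - b * t) * (ε2 * b / δ) := by
              apply setIntegral_le_integral (hfb.mul_const _)
              exact Eventually.of_forall fun t => mul_nonneg (hf_nonneg _) (by positivity)
          _ = (∫ t, f (u - b * t)) * (ε2 * b / δ) := integral_mul_const _ _
          _ = b⁻¹ * (ε2 * b / δ) := by rw [hfb_val b hb0]
          _ = ε2 / δ := by field_simp
      have hB : (∫ t in S, f u * |k t|) ≤ f u * ε3 := by
        calc (∫ t in S, f u * |k t|) = f u * ∫ t in S, |k t| := integral_const_mul _ _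
          _ ≤ f u * ε3 := by
              apply mul_le_mul_of_nonneg_left _ (hf_nonneg u)
              refine le_trans ?_ hNtail.le
              exact setIntegral_mono_set hkabs.integrableOn
                (Eventually.of_forall fun t => abs_nonneg _)
                (HasSubset.Subset.eventuallyLE hS_sub)
      calc |∫ t in S, (f (u - b * t) - f u) * k t|
          ≤ ∫ t in S, |(f (u - b * t) - f u) * k t| := by
            simpa only [Real.norm_eq_abs] using
              norm_integral_le_integral_norm (μ := volume.restrict S)
                (fun t => (f (u - b * t) - f u) * k t)
        _ ≤ ∫ t in S, (f (u - b * t) * |k t| + f u * |k t|) :=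
            setIntegral_mono_on hdiff_abs.integrableOn hsum_int.integrableOn hSmeas habs_le
        _ = (∫ t in S, f (u - b * t) * |k t|) + ∫ t in S, f u * |k t| :=
            integral_add hfk_abs.integrableOn (hkabs.const_mul (f u)).integrableOn
        _ ≤ ε2 / δ + f u * ε3 := add_le_add hA hB
    -- combine
    have h1 : ε1 * K < ε / 3 := by
      have : ε1 * K < ε1 * (K + 1) := mul_lt_mul_of_pos_left (by linarith) hε1
      have heq : ε1 * (K + 1) = ε / 3 := by
        rw [hε1_def]; field_simp
      linarith
    have h2 : ε2 / δ = ε / 4 := by rw [hε2_def]; field_simp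
    have h3 : f u * ε3 < ε / 3 := by
      have : f u * ε3 < (f u + 1) * ε3 := mul_lt_mul_of_pos_right (by linarith) hε3
      have heq : (f u + 1) * ε3 = ε / 3 := by
        rw [hε3_def]; field_simp
      linarith
    calc |(∫ t in S, (f (u - b * t) - f u) * k t) + ∫ t in Sᶜ, (f (u - b * t) - f u) * k t|
        ≤ |∫ t in S, (f (u - b * t) - f u) * k t|
          + |∫ t in Sᶜ, (f (u - b * t) - f u) * k t| := abs_add_le _ _
      _ ≤ (ε2 / δ + f u * ε3) + ε1 * K := add_le_add hfar_bd hnear_bd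
      _ < ε := by rw [h2] at *; linarith
  -- change of variables for the second formulation
  have heq : ∀ b ∈ Set.Ioi (0:ℝ),
      (∫ x, (k ((u - x) / b) / b) * f x) = ∫ t, f (u - b * t) * k t := by
    intro b hb
    have hb0 : (0:ℝ) < b := hb
    set g : ℝ → ℝ := fun y => k (y / b) / b * f (u - y) with hg_def
    have step1 : (∫ x, (k ((u - x) / b) / b) * f x) = ∫ x, g x := by
      rw [← MeasureTheory.integral_sub_left_eq_self g volume u]
      congr 1
      funext x
      simp [hg_def, sub_sub_cancel]
    have step2 : (∫ t, g (b * t)) = |b⁻¹| • ∫ y, g y :=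
      MeasureTheory.Measure.integral_comp_mul_left g b
    have step3 : (∫ t, g (b * t)) = ∫ t, f (u - b * t) * k t / b := by
      congr 1
      funext t
      rw [hg_def]
      simp only []
      rw [mul_comm b t, mul_div_assoc, div_self hb0.ne', mul_one]
      ring
    rw [step1]
    have : (∫ y, g y) = b * ∫ t, g (b * t) := by
      rw [step2, abs_of_pos (inv_pos.mpr hb0), smul_eq_mul, ← mul_assoc,
        mul_inv_cancel₀ hb0.ne', one_mul]
    rw [this, step3, integral_div]
    field_simp
  refine ⟨main, main.congr' ?_⟩
  filter_upwards [self_mem_nhdsWithin] with b hb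
  exact (heq b hb).symm
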